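/- (Convexity of the surely optimal martingales, Proposition 1, part 2.) For every 0 ≤ j ≤ J the set M^{∘∘,j} is convex: if M and M' are martingales with M_0 = M'_0 = 0 that are both surely optimal at j, and θ ∈ (0,1), then θM + (1−θ)M' is surely optimal at j. Consequently M^∘∘ is convex. -/

import Mathlib

open MeasureTheory Finset

private lemma integrable_sup'_aux {Ω : Type*} {mΩ : MeasurableSpace Ω} {μ : Measure Ω}
    {s : Finset ℕ} (hs : s.Nonempty) (F : ℕ → Ω → ℝ) (hF : ∀ i, Integrable (F i) μ) :
    Integrable (fun ω => s.sup' hs fun i => F i ω) μ := by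
  induction hs using Finset.Nonempty.cons_induction with
  | singleton i =>
      simp only [Finset.sup'_singleton]
      exact hF i
  | cons i s hi hs ih =>
      simp only [Finset.sup'_cons hs]
      exact (hF i).sup ih

/-- **Convexity of the surely optimal martingales (Proposition 1, part 2).**
For every `0 ≤ j ≤ J`: if `M` and `M'` are martingales with `M 0 = M' 0 = 0` that are both
surely optimal at `j`, and `θ ∈ (0,1)`, then `θ•M + (1−θ)•M'` is surely optimal at `j`.
(Consequently the sets `M^{∘∘,j}` and `M^∘∘` are convex.) -/
theorem surely_optimal_convex
    {Ω : Type*} {mΩ : MeasurableSpace Ω} {μ : Measure Ω} [IsProbabilityMeasure μ]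
    (J : ℕ) (ℱ : Filtration ℕ mΩ)
    (Z Y : ℕ → Ω → ℝ)
    (hZ_adapted : Adapted ℱ Z)
    (hZ_int : ∀ j, Integrable (Z j) μ)
    (hYJ : ∀ ω, Y J ω = Z J ω)
    (hY : ∀ j, j < J → ∀ ω, Y j ω = max (Z j ω) ((μ[Y (j + 1) | ℱ j]) ω))
    (M M' : ℕ → Ω → ℝ)
    (hM : Martingale M ℱ μ) (hM' : Martingale M' ℱ μ)
    (hM0 : ∀ ω, M 0 ω = 0) (hM'0 : ∀ ω, M' 0 ω = 0)
    (θ : ℝ) (hθ : θ ∈ Set.Ioo (0 : ℝ) 1)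
    (j : ℕ) (hj : j ≤ J)
    (hopt : ∀ᵐ ω ∂μ, Y j ω = (Finset.Icc j J).sup' (Finset.nonempty_Icc.mpr hj)
        (fun r => Z r ω - M r ω + M j ω))
    (hopt' : ∀ᵐ ω ∂μ, Y j ω = (Finset.Icc j J).sup' (Finset.nonempty_Icc.mpr hj)
        (fun r => Z r ω - M' r ω + M' j ω)) :
    ∀ᵐ ω ∂μ, Y j ω = (Finset.Icc j J).sup' (Finset.nonempty_Icc.mpr hj)
        (fun r => Z r ω - (θ * M r ω + (1 - θ) * M' r ω)
          + (θ * M j ω + (1 - θ) * M' j ω)) := by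
  obtain ⟨hθ0, hθ1⟩ := hθ
  -- the convex combination martingale
  set N : ℕ → Ω → ℝ := fun k ω => θ * M k ω + (1 - θ) * M' k ω with hNdef
  have hNmart : Martingale N ℱ μ := by
    have h := (hM.smul θ).add (hM'.smul (1 - θ))
    convert h using 2 with k ω
    exact funext fun k => funext fun ω => rfl
  have hNint : ∀ k, Integrable (N k) μ := fun k => hNmart.integrable k
  -- integrability of the Snell envelope
  have hYint : ∀ d r, r + d = J → Integrable (Y r) μ := by
    intro d
    induction d with
    | zero =>
        intro r hr
        have hrJ : r = J := by omega
        subst hrJ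
        exact (hZ_int r).congr (Filter.Eventually.of_forall fun ω => (hYJ ω).symm)
    | succ d ih =>
        intro r hr
        have hrJ : r < J := by omega
        have : Y r = fun ω => max (Z r ω) ((μ[Y (r + 1) | ℱ r]) ω) :=
          funext fun ω => hY r hrJ ω
        rw [this]
        exact (hZ_int r).sup integrable_condExp
  -- the key inequality:
  -- `Y r - N r ≤ E[ sup_{r ≤ s ≤ J} (Z s - N s) | ℱ r ]` a.e.
  have key : ∀ d r (hr : r + d = J),
      (fun ω => Y r ω - N r ω) ≤ᵐ[μ]
        μ[(fun ω => (Finset.Icc r J).sup' (Finset.nonempty_Icc.mpr (by omega))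
            fun s => Z s ω - N s ω) | ℱ r] := by
    intro d
    induction d with
    | zero =>
        intro r hr
        have hrJ : r = J := by omega
        subst hrJ
        have hYeq : Y r = Z r := funext hYJ
        have hsingle : (fun ω => (Finset.Icc r r).sup' (Finset.nonempty_Icc.mpr le_rfl)
            fun s => Z s ω - N s ω) = fun ω => Y r ω - N r ω := by
          funext ω
          simp [Finset.Icc_self, hYeq]
        have hsm : StronglyMeasurable[ℱ r] (fun ω => Y r ω - N r ω) := by
          rw [show (fun ω => Y r ω - N r ω) = fun ω => Z r ω - N r ω from
            funext fun ω => by rw [hYeq]]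
          exact (hZ_adapted r).stronglyMeasurable.sub (hNmart.stronglyAdapted r)
        have hint : Integrable (fun ω => Y r ω - N r ω) μ := by
          rw [show (fun ω => Y r ω - N r ω) = fun ω => Z r ω - N r ω from
            funext fun ω => by rw [hYeq]]
          exact (hZ_int r).sub (hNint r)
        rw [hsingle,
          condExp_of_stronglyMeasurable (ℱ.le r) hsm hint]
    | succ d ih =>
        intro r hr
        have hrJ : r < J := by omega
        have hrJ' : r ≤ J := hrJ.le
        set T : Ω → ℝ := fun ω => (Finset.Icc r J).sup' (Finset.nonempty_Icc.mpr hrJ')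
          fun s => Z s ω - N s ω with hTdef
        set T' : Ω → ℝ := fun ω =>
          (Finset.Icc (r + 1) J).sup' (Finset.nonempty_Icc.mpr (by omega))
          fun s => Z s ω - N s ω with hT'def
        have hTint : Integrable T μ :=
          integrable_sup'_aux _ _ fun i => (hZ_int i).sub (hNint i)
        have hT'int : Integrable T' μ :=
          integrable_sup'_aux _ _ fun i => (hZ_int i).sub (hNint i)
        -- `Z r - N r ≤ T` pointwise
        have h1 : (fun ω => Z r ω - N r ω) ≤ T := fun ω =>
          Finset.le_sup' (f := fun s => Z s ω - N s ω)
            (Finset.mem_Icc.mpr ⟨le_rfl, hrJ'⟩)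
        -- `T' ≤ T` pointwise
        have h2 : T' ≤ T := by
          intro ω
          refine Finset.sup'_le _ _ fun s hs => ?_
          have hs' := Finset.mem_Icc.mp hs
          exact Finset.le_sup' (f := fun s => Z s ω - N s ω)
            (Finset.mem_Icc.mpr ⟨by omega, hs'.2⟩)
        -- first bound: `Z r - N r ≤ E[T | ℱ r]`
        have c1 : (fun ω => Z r ω - N r ω) ≤ᵐ[μ] μ[T | ℱ r] := by
          have hmono := condExp_mono (m := ℱ r) (f := fun ω => Z r ω - N r ω) (g := T)
            ((hZ_int r).sub (hNint r)) hTint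
            (Filter.Eventually.of_forall h1)
          have heq : μ[(fun ω => Z r ω - N r ω) | ℱ r] = fun ω => Z r ω - N r ω :=
            condExp_of_stronglyMeasurable (ℱ.le r)
              ((hZ_adapted r).stronglyMeasurable.sub (hNmart.stronglyAdapted r)) ((hZ_int r).sub (hNint r))
          rw [heq] at hmono
          exact hmono
        -- second bound: `E[Y (r+1) | ℱ r] - N r ≤ E[T | ℱ r]`
        have c2 : (fun ω => (μ[Y (r + 1) | ℱ r]) ω - N r ω) ≤ᵐ[μ] μ[T | ℱ r] := by
          have hY1int : Integrable (Y (r + 1)) μ := hYint d (r + 1) (by omega)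
          have hIH := ih (r + 1) (by omega)
          have step1 : μ[(fun ω => Y (r + 1) ω - N (r + 1) ω) | ℱ r] ≤ᵐ[μ]
              μ[μ[T' | ℱ (r + 1)] | ℱ r] :=
            condExp_mono (f := fun ω => Y (r + 1) ω - N (r + 1) ω)
              (g := μ[T' | ℱ (r + 1)])
              (hY1int.sub (hNint (r + 1))) integrable_condExp hIH
          have step2 : μ[μ[T' | ℱ (r + 1)] | ℱ r] =ᵐ[μ] μ[T' | ℱ r] :=
            condExp_condExp_of_le (ℱ.mono (Nat.le_succ r)) (ℱ.le (r + 1))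
          have step3 : μ[T' | ℱ r] ≤ᵐ[μ] μ[T | ℱ r] :=
            condExp_mono hT'int hTint (Filter.Eventually.of_forall h2)
          have step0 : μ[(fun ω => Y (r + 1) ω - N (r + 1) ω) | ℱ r] =ᵐ[μ]
              fun ω => (μ[Y (r + 1) | ℱ r]) ω - N r ω := by
            have hsub : μ[(fun ω => Y (r + 1) ω - N (r + 1) ω) | ℱ r] =ᵐ[μ]
                μ[Y (r + 1) | ℱ r] - μ[N (r + 1) | ℱ r] :=
              condExp_sub (m := ℱ r) hY1int (hNint (r + 1))
            have hmart := hNmart.condExp_ae_eq (Nat.le_succ r)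
            filter_upwards [hsub, hmart] with ω h h'
            rw [h, Pi.sub_apply, h']
          filter_upwards [step0, step1, step2, step3] with ω h0 h1' h2' h3'
          calc (μ[Y (r + 1) | ℱ r]) ω - N r ω = _ := h0.symm
            _ ≤ (μ[μ[T' | ℱ (r + 1)] | ℱ r]) ω := h1'
            _ = (μ[T' | ℱ r]) ω := h2'
            _ ≤ (μ[T | ℱ r]) ω := h3'
        filter_upwards [c1, c2] with ω hc1 hc2
        rw [hY r hrJ ω]
        rw [sub_le_iff_le_add]
        exact max_le (by linarith) (by linarith)
  -- apply key at `r = j`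
  have hkey := key (J - j) j (by omega)
  set T : Ω → ℝ := fun ω => (Finset.Icc j J).sup' (Finset.nonempty_Icc.mpr hj)
    fun s => Z s ω - N s ω with hTdef
  set S : Ω → ℝ := fun ω => (Finset.Icc j J).sup' (Finset.nonempty_Icc.mpr hj)
    fun s => Z s ω - N s ω + N j ω with hSdef
  have hST : S = T + N j := by
    funext ω
    show (Finset.Icc j J).sup' _ _ = T ω + N j ω
    simp only [hTdef]
    rw [Finset.sup'_add]
  have hTint : Integrable T μ :=
    integrable_sup'_aux _ _ fun i => (hZ_int i).sub (hNint i)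
  have hSint : Integrable S μ := by
    rw [hST]; exact hTint.add (hNint j)
  -- upper bound: `S ≤ Y j` a.e.
  have hupper : ∀ᵐ ω ∂μ, S ω ≤ Y j ω := by
    filter_upwards [hopt, hopt'] with ω h h'
    refine Finset.sup'_le _ _ fun r hr => ?_
    have hf := Finset.le_sup' (fun s => Z s ω - M s ω + M j ω) hr
    have hg := Finset.le_sup' (fun s => Z s ω - M' s ω + M' j ω) hr
    rw [← h] at hf
    rw [← h'] at hg
    have hrw : Z r ω - N r ω + N j ω =
        θ * (Z r ω - M r ω + M j ω) + (1 - θ) * (Z r ω - M' r ω + M' j ω) := by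
      simp only [hNdef]; ring
    rw [hrw]
    calc θ * (Z r ω - M r ω + M j ω) + (1 - θ) * (Z r ω - M' r ω + M' j ω)
        ≤ θ * Y j ω + (1 - θ) * Y j ω :=
          add_le_add (mul_le_mul_of_nonneg_left hf hθ0.le)
            (mul_le_mul_of_nonneg_left hg (by linarith))
      _ = Y j ω := by ring
  -- lower bound in conditional expectation: `Y j ≤ E[S | ℱ j]` a.e.
  have hlower : ∀ᵐ ω ∂μ, Y j ω ≤ (μ[S | ℱ j]) ω := by
    have hcond : μ[S | ℱ j] =ᵐ[μ] fun ω => (μ[T | ℱ j]) ω + N j ω := by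
      rw [hST]
      have hadd := condExp_add (m := ℱ j) hTint (hNint j)
      have hNj : μ[N j | ℱ j] = N j :=
        condExp_of_stronglyMeasurable (ℱ.le j) (hNmart.stronglyAdapted j) (hNint j)
      filter_upwards [hadd] with ω h
      rw [h, Pi.add_apply, hNj]
    filter_upwards [hcond, hkey] with ω h h'
    rw [h]
    have : Y j ω - N j ω ≤ (μ[T | ℱ j]) ω := h'
    linarith
  -- combine
  have hYjint : Integrable (Y j) μ := hYint (J - j) j (by omega)
  have hint_le : ∫ ω, Y j ω ∂μ ≤ ∫ ω, S ω ∂μ := by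
    have h1 : ∫ ω, Y j ω ∂μ ≤ ∫ ω, (μ[S | ℱ j]) ω ∂μ :=
      integral_mono_ae hYjint integrable_condExp hlower
    rwa [integral_condExp (ℱ.le j)] at h1
  have hnonneg : 0 ≤ᵐ[μ] fun ω => Y j ω - S ω := by
    filter_upwards [hupper] with ω h
    simpa using h
  have hzero : ∫ ω, (Y j ω - S ω) ∂μ = 0 := by
    have hge := integral_nonneg_of_ae hnonneg
    have h2 : ∫ ω, (Y j ω - S ω) ∂μ = ∫ ω, Y j ω ∂μ - ∫ ω, S ω ∂μ :=
      integral_sub hYjint hSint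
    rw [h2] at hge ⊢
    linarith
  have hae := (integral_eq_zero_iff_of_nonneg_ae hnonneg (hYjint.sub hSint)).mp hzero
  filter_upwards [hae] with ω h
  have h0 : Y j ω - S ω = 0 := h
  have hYS : Y j ω = S ω := by linarith
  simpa [hSdef, hNdef] using hYS
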